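/- For every n ≥ 1, the n-qubit W state admits a basis under local unitaries: there exist 2^n strings V_j = U₁^{(j)} ⊗ ⋯ ⊗ Uₙ^{(j)} (j = 1, …, 2^n) of 2×2 complex unitary matrices such that the vectors V_j W_n form an orthonormal basis of ℂ^{2^n}, where W_n ∈ (ℂ²)^{⊗n} is the W state. -/

import Mathlib

open Matrix

/-- A family of vectors in `ℂ^κ` forms an orthonormal basis: the vectors are
pairwise orthogonal unit vectors and they span the whole space. -/
def IsONBasis {ι κ : Type*} [Fintype ι] [DecidableEq ι] [Fintype κ] (v : ι → κ → ℂ) : Prop :=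
  (∀ j j', star (v j) ⬝ᵥ v j' = if j = j' then 1 else 0) ∧
    Submodule.span ℂ (Set.range v) = ⊤

/-- The `n`-fold Kronecker product `U 0 ⊗ ⋯ ⊗ U (n-1)` of `2×2` matrices, acting on
`(ℂ²)^{⊗n} ≅ ℂ^{2^n}` indexed by `Fin n → Fin 2`. -/
def kronPow {n : ℕ} (U : Fin n → Matrix (Fin 2) (Fin 2) ℂ) :
    Matrix (Fin n → Fin 2) (Fin n → Fin 2) ℂ :=
  Matrix.of fun x y => ∏ k, U k (x k) (y k)

/-- The `n`-qubit `W` state: its coordinate at a bit string `x` equals `1/√n` if `x`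
contains exactly one `1`, and `0` otherwise. -/
noncomputable def Wstate (n : ℕ) : (Fin n → Fin 2) → ℂ :=
  fun x => if (Finset.univ.filter fun k => x k = 1).card = 1 then ((Real.sqrt n : ℂ))⁻¹ else 0

variable {n : ℕ}

/-- standard basis bit string with a single 1 at position k -/
def eu (n : ℕ) (k : Fin n) : Fin n → Fin 2 := fun m => if m = k then 1 else 0

/-- sign -/
def sgn (S : Fin n → Fin 2) (k : Fin n) : ℂ :=
  ∏ m, if k < m ∧ S m = 1 then (-1 : ℂ) else 1

lemma sgn_mul_self (S : Fin n → Fin 2) (k : Fin n) : sgn S k * sgn S k = 1 := by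
  rw [sgn, ← Finset.prod_mul_distrib]
  apply Finset.prod_eq_one
  intro m _
  split <;> norm_num

lemma star_sgn (S : Fin n → Fin 2) (k : Fin n) : star (sgn S k) = sgn S k := by
  rw [sgn, star_prod]
  apply Finset.prod_congr rfl
  intro m _
  split <;> simp

lemma sgn_flip (S S' : Fin n → Fin 2) (p q k : Fin n) (hpq : p ≠ q)
    (hout : ∀ m, m ≠ p → m ≠ q → S' m = S m) (hp : S' p ≠ S p) (hq : S' q ≠ S q) :
    sgn S k * sgn S' k = (if k < p then -1 else 1) * (if k < q then -1 else 1) := by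
  rw [sgn, sgn, ← Finset.prod_mul_distrib]
  have hrw : ∀ m ∈ Finset.univ, m ∉ ({p, q} : Finset (Fin n)) →
      ((if k < m ∧ S m = 1 then (-1:ℂ) else 1) * (if k < m ∧ S' m = 1 then (-1:ℂ) else 1)) = 1 := by
    intro m _ hm
    simp only [Finset.mem_insert, Finset.mem_singleton, not_or] at hm
    rw [hout m hm.1 hm.2]
    split <;> norm_num
  rw [← Finset.prod_subset (Finset.subset_univ ({p, q} : Finset (Fin n))) hrw,
    Finset.prod_pair hpq]
  have h2 : ∀ a b : Fin 2, a ≠ b → ((a = 1 ∧ ¬ b = 1) ∨ (b = 1 ∧ ¬ a = 1)) := by decide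
  have hfac : ∀ (r : Fin n), S' r ≠ S r →
      ((if k < r ∧ S r = 1 then (-1:ℂ) else 1) * (if k < r ∧ S' r = 1 then (-1:ℂ) else 1))
        = (if k < r then -1 else 1) := by
    intro r hr
    by_cases hkr : k < r
    · rcases h2 _ _ (Ne.symm hr) with ⟨h1, h2'⟩ | ⟨h1, h2'⟩
      · rw [if_pos ⟨hkr, h1⟩, if_neg (by tauto), if_pos hkr]; ring
      · rw [if_neg (by tauto), if_pos ⟨hkr, h1⟩, if_pos hkr]; ring
    · rw [if_neg (by tauto), if_neg (by tauto), if_neg hkr]; ring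
  rw [hfac p hp, hfac q hq]

lemma sgn_cancel (S S' : Fin n → Fin 2) (p q : Fin n) (hpq : p ≠ q)
    (hout : ∀ m, m ≠ p → m ≠ q → S' m = S m) (hp : S' p ≠ S p) (hq : S' q ≠ S q) :
    sgn S p * sgn S' q + sgn S q * sgn S' p = 0 := by
  have e1 : sgn S' q = sgn S q * ((if (q:Fin n) < p then (-1:ℂ) else 1)) := by
    have := sgn_flip S S' p q q hpq hout hp hq
    rw [if_neg (lt_irrefl q), mul_one] at this
    calc sgn S' q = (sgn S q * sgn S q) * sgn S' q := by rw [sgn_mul_self, one_mul]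
    _ = sgn S q * (sgn S q * sgn S' q) := by ring
    _ = _ := by rw [this]
  have e2 : sgn S' p = sgn S p * ((if (p:Fin n) < q then (-1:ℂ) else 1)) := by
    have := sgn_flip S S' p q p hpq hout hp hq
    rw [if_neg (lt_irrefl p), one_mul] at this
    calc sgn S' p = (sgn S p * sgn S p) * sgn S' p := by rw [sgn_mul_self, one_mul]
    _ = sgn S p * (sgn S p * sgn S' p) := by ring
    _ = _ := by rw [this]
  rw [e1, e2]
  rcases lt_or_gt_of_ne hpq with h | h
  · rw [if_pos h, if_neg (asymm h)]; ring
  · rw [if_neg (asymm h), if_pos h]; ring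

noncomputable def cW (n : ℕ) : ℂ := ((Real.sqrt n : ℂ))⁻¹

def Ufam (S : Fin n → Fin 2) (k : Fin n) : Matrix (Fin 2) (Fin 2) ℂ :=
  Matrix.of fun a b => if a = b + S k then (if b = 1 then sgn S k else 1) else 0

lemma eu_filter (k : Fin n) :
    (Finset.univ.filter fun m => eu n k m = 1) = {k} := by
  ext m
  simp only [Finset.mem_filter, Finset.mem_univ, true_and, Finset.mem_singleton]
  simp only [eu]
  constructor
  · intro h; by_contra hm; rw [if_neg hm] at h; exact absurd h (by decide)
  · intro h; rw [if_pos h]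

lemma Wstate_eq (y : Fin n → Fin 2) :
    Wstate n y = ∑ k, if y = eu n k then cW n else 0 := by
  rw [Wstate]
  by_cases h : (Finset.univ.filter fun m => y m = 1).card = 1
  · rw [if_pos h]
    rcases Finset.card_eq_one.mp h with ⟨k₀, hk₀⟩
    have hm : ∀ m, y m = 1 ↔ m = k₀ := by
      intro m
      have := Finset.ext_iff.mp hk₀ m
      simpa using this
    have hy : y = eu n k₀ := by
      funext m
      have h01 : ∀ a : Fin 2, a ≠ 1 → a = 0 := by decide
      by_cases hc : m = k₀
      · rw [eu, if_pos hc, (hm m).mpr hc]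
      · rw [eu, if_neg hc, h01 _ (fun hh => hc ((hm m).mp hh))]
    have huniq : ∀ k, y = eu n k ↔ k = k₀ := by
      intro k
      constructor
      · intro hk
        have h1 : eu n k k = 1 := by rw [eu, if_pos rfl]
        rw [← hk] at h1
        exact (hm k).mp h1
      · intro hk; rw [hk, hy]
    simp only [huniq]
    rw [Finset.sum_ite_eq' Finset.univ k₀ (fun _ => cW n), if_pos (Finset.mem_univ _)]
    rfl
  · rw [if_neg h]
    symm
    apply Finset.sum_eq_zero
    intro k _
    rw [if_neg]
    intro hk
    rw [hk] at h
    exact h (by rw [eu_filter k, Finset.card_singleton])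

noncomputable def vvec (n : ℕ) (S : Fin n → Fin 2) : (Fin n → Fin 2) → ℂ :=
  fun x => ∑ k, if x = S + eu n k then cW n * sgn S k else 0

lemma kron_entry (S : Fin n → Fin 2) (x : Fin n → Fin 2) (k : Fin n) :
    kronPow (Ufam S) x (eu n k) = if x = S + eu n k then sgn S k else 0 := by
  rw [kronPow]
  show (∏ m, Ufam S m (x m) (eu n k m)) = _
  by_cases hx : x = S + eu n k
  · rw [if_pos hx]
    have hterm : ∀ m, Ufam S m (x m) (eu n k m) = if eu n k m = 1 then sgn S m else 1 := by
      intro m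
      rw [Ufam]
      show (if x m = eu n k m + S m then (if eu n k m = 1 then sgn S m else 1) else 0) = _
      rw [if_pos (by rw [hx]; show S m + eu n k m = _; rw [add_comm])]
    rw [Finset.prod_congr rfl (fun m _ => hterm m)]
    rw [Finset.prod_eq_single k]
    · rw [if_pos (by rw [eu, if_pos rfl])]
    · intro m _ hm
      rw [if_neg (by rw [eu, if_neg hm]; decide)]
    · intro h; exact absurd (Finset.mem_univ k) h
  · rw [if_neg hx]
    have : ∃ m, x m ≠ S m + eu n k m := by
      by_contra hc
      push_neg at hc
      exact hx (funext hc)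
    rcases this with ⟨m, hm⟩
    apply Finset.prod_eq_zero (Finset.mem_univ m)
    rw [Ufam]
    show (if x m = eu n k m + S m then (if eu n k m = 1 then sgn S m else 1) else 0) = 0
    rw [if_neg (by rw [add_comm]; exact hm)]

lemma mulVec_eq (S : Fin n → Fin 2) :
    kronPow (Ufam S) *ᵥ Wstate n = vvec n S := by
  funext x
  rw [mulVec, vvec]
  show (∑ y, kronPow (Ufam S) x y * Wstate n y) = _
  have h1 : ∀ y, kronPow (Ufam S) x y * Wstate n y
      = ∑ k, (if y = eu n k then kronPow (Ufam S) x (eu n k) * cW n else 0) := by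
    intro y
    rw [Wstate_eq, Finset.mul_sum]
    apply Finset.sum_congr rfl
    intro k _
    split
    · next h => rw [h]
    · rw [mul_zero]
  rw [Finset.sum_congr rfl (fun y _ => h1 y), Finset.sum_comm]
  apply Finset.sum_congr rfl
  intro k _
  rw [Finset.sum_ite_eq' Finset.univ (eu n k) (fun _ => kronPow (Ufam S) x (eu n k) * cW n),
    if_pos (Finset.mem_univ _), kron_entry]
  split <;> ring

lemma Ufam_unitary (S : Fin n → Fin 2) (k : Fin n) :
    Ufam S k ∈ Matrix.unitaryGroup (Fin 2) ℂ := by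
  rw [Matrix.mem_unitaryGroup_iff]
  have hs : S k = 0 ∨ S k = 1 := by omega
  have hsg := sgn_mul_self S k
  have hst := star_sgn S k
  ext i j
  rcases hs with hs | hs <;>
  fin_cases i <;> fin_cases j <;>
  simp [Matrix.mul_apply, Fin.sum_univ_two, Ufam, Matrix.one_apply, hs, hst, hsg,
    Matrix.conjTranspose_apply] <;>
  rw [show (starRingEnd ℂ) (sgn S k) = star (sgn S k) from rfl, hst, hsg]

lemma star_cW : star (cW n) = cW n := by
  simp [cW]

lemma star_vvec (S : Fin n → Fin 2) (x : Fin n → Fin 2) :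
    star (vvec n S x) = vvec n S x := by
  rw [vvec, star_sum]
  apply Finset.sum_congr rfl
  intro k _
  split
  · rw [star_mul', star_cW, star_sgn]
  · exact star_zero ℂ

lemma delta_sum {α : Type*} [Fintype α] [DecidableEq α] (a b : α) (u w : ℂ) :
    (∑ x, (if x = a then u else 0) * (if x = b then w else 0)) = if a = b then u * w else 0 := by
  rw [Finset.sum_eq_single a]
  · rw [if_pos rfl]; split <;> ring
  · intro x _ hx; rw [if_neg hx, zero_mul]
  · intro h; exact absurd (Finset.mem_univ a) h

lemma eu_self (k : Fin n) : eu n k k = 1 := by rw [eu, if_pos rfl]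
lemma eu_ne (k m : Fin n) (h : m ≠ k) : eu n k m = 0 := by rw [eu, if_neg h]

lemma cW_sq (hn : 1 ≤ n) : cW n * cW n = ((n : ℂ))⁻¹ := by
  rw [cW, ← mul_inv]
  congr 1
  rw [← Complex.ofReal_mul, Real.mul_self_sqrt (Nat.cast_nonneg n)]
  norm_num

lemma gram (hn : 1 ≤ n) (S S' : Fin n → Fin 2) :
    star (vvec n S) ⬝ᵥ vvec n S' = if S = S' then 1 else 0 := by
  have hsum : star (vvec n S) ⬝ᵥ vvec n S'
      = ∑ k, ∑ l, if S + eu n k = S' + eu n l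
          then (cW n * sgn S k) * (cW n * sgn S' l) else 0 := by
    rw [dotProduct]
    have h1 : ∀ x, star (vvec n S) x * vvec n S' x
        = ∑ k, ∑ l, (if x = S + eu n k then cW n * sgn S k else 0)
            * (if x = S' + eu n l then cW n * sgn S' l else 0) := by
      intro x
      rw [Pi.star_apply, star_vvec, vvec, vvec, Finset.sum_mul_sum]
    rw [Finset.sum_congr rfl (fun x _ => h1 x)]
    rw [Finset.sum_comm]
    apply Finset.sum_congr rfl
    intro k _
    rw [Finset.sum_comm]
    apply Finset.sum_congr rfl
    intro l _
    exact delta_sum _ _ _ _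
  rw [hsum]
  by_cases hS : S = S'
  · subst hS
    rw [if_pos rfl]
    have hcond : ∀ k l : Fin n, (S + eu n k = S + eu n l) ↔ l = k := by
      intro k l
      constructor
      · intro h
        have h2 := add_left_cancel h
        have h3 := congrFun h2 k
        rw [eu_self] at h3
        by_contra hc
        rw [eu_ne l k (fun hh => hc (hh.symm))] at h3
        exact absurd h3 (by decide)
      · intro h; rw [h]
    have : ∀ k : Fin n, (∑ l, if S + eu n k = S + eu n l
        then (cW n * sgn S k) * (cW n * sgn S l) else 0) = (n : ℂ)⁻¹ := by
      intro k
      simp only [hcond]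
      rw [Finset.sum_ite_eq' Finset.univ k, if_pos (Finset.mem_univ _)]
      have := sgn_mul_self S k
      calc cW n * sgn S k * (cW n * sgn S k) = (cW n * cW n) * (sgn S k * sgn S k) := by ring
      _ = (n:ℂ)⁻¹ := by rw [this, cW_sq hn, mul_one]
    rw [Finset.sum_congr rfl (fun k _ => this k), Finset.sum_const, Finset.card_univ,
      Fintype.card_fin, nsmul_eq_mul]
    rw [mul_inv_cancel₀]
    exact Nat.cast_ne_zero.mpr (by omega)

  · rw [if_neg hS]
    have h4 : ∀ a b c d : Fin 2, (a + c = b + d) ↔ (c + d = a + b) := by decide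
    have hcond : ∀ k l : Fin n, (S + eu n k = S' + eu n l)
        ↔ (∀ m, eu n k m + eu n l m = S m + S' m) := by
      intro k l
      simp only [funext_iff, Pi.add_apply]
      exact ⟨fun h m => (h4 _ _ _ _).mp (h m), fun h m => (h4 _ _ _ _).mpr (h m)⟩
    by_cases hw : ∃ p q : Fin n, p ≠ q ∧ (∀ m, eu n p m + eu n q m = S m + S' m)
    · obtain ⟨p, q, hpq, hD⟩ := hw
      have hchar : ∀ k l : Fin n, (∀ m, eu n k m + eu n l m = S m + S' m)
          ↔ ((k = p ∧ l = q) ∨ (k = q ∧ l = p)) := by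
        intro k l
        constructor
        · intro h
          have h' : ∀ m, eu n k m + eu n l m = eu n p m + eu n q m := by
            intro m; rw [h m, hD m]
          have hone : ∀ a b : Fin 2, a + b = 1 + 0 → ((a = 1 ∧ b = 0) ∨ (a = 0 ∧ b = 1)) := by
            decide
          have heu1 : ∀ (r m : Fin n), eu n r m = 1 → m = r := by
            intro r m hrm
            by_contra hc
            rw [eu_ne r m hc] at hrm
            exact absurd hrm (by decide)
          have hzero1 : ∀ (r m : Fin n), eu n r m = 0 → m ≠ r := by
            intro r m hrm hc
            rw [hc, eu_self] at hrm
            exact absurd hrm (by decide)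
          have hhp := h' p
          rw [eu_self, eu_ne q p hpq] at hhp
          have hhq := h' q
          rw [eu_self, eu_ne p q (Ne.symm hpq)] at hhq
          have hhq' : eu n k q + eu n l q = 1 + 0 := by
            rw [hhq]; decide
          rcases hone _ _ hhp with ⟨ha, hb⟩ | ⟨ha, hb⟩
          · left
            refine ⟨(heu1 k p ha).symm, ?_⟩
            rcases hone _ _ hhq' with ⟨hc, hd⟩ | ⟨hc, hd⟩
            · exact absurd ((heu1 k p ha) ▸ (heu1 k q hc)) (Ne.symm hpq)
            · exact (heu1 l q hd).symm
          · right
            refine ⟨?_, (heu1 l p hb).symm⟩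
            rcases hone _ _ hhq' with ⟨hc, hd⟩ | ⟨hc, hd⟩
            · exact (heu1 k q hc).symm
            · exact absurd ((heu1 l p hb) ▸ (heu1 l q hd)) (Ne.symm hpq)
        · rintro (⟨hk, hl⟩ | ⟨hk, hl⟩)
          · rw [hk, hl]; exact hD
          · rw [hk, hl]; intro m; rw [add_comm]; exact hD m
      have hterm : ∀ k l : Fin n,
          (if S + eu n k = S' + eu n l then (cW n * sgn S k) * (cW n * sgn S' l) else 0)
          = (if (k = p ∧ l = q) ∨ (k = q ∧ l = p)
              then (cW n * sgn S k) * (cW n * sgn S' l) else 0) := by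
        intro k l
        exact if_congr ((hcond k l).trans (hchar k l)) rfl rfl
      simp only [hterm]
      rw [← Finset.sum_product', Finset.univ_product_univ]
      have hsub : (∑ x : Fin n × Fin n, if x.1 = p ∧ x.2 = q ∨ x.1 = q ∧ x.2 = p
              then cW n * sgn S x.1 * (cW n * sgn S' x.2) else 0)
          = ∑ x ∈ ({(p,q),(q,p)} : Finset (Fin n × Fin n)),
              (if x.1 = p ∧ x.2 = q ∨ x.1 = q ∧ x.2 = p
                then cW n * sgn S x.1 * (cW n * sgn S' x.2) else 0) := by
        symm
        apply Finset.sum_subset (Finset.subset_univ _)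
        rintro ⟨k, l⟩ _ hx
        simp only [Finset.mem_insert, Finset.mem_singleton, Prod.mk.injEq, not_or] at hx
        rw [if_neg]
        rintro (⟨hk, hl⟩ | ⟨hk, hl⟩)
        · exact hx.1 ⟨hk, hl⟩
        · exact hx.2 ⟨hk, hl⟩
      rw [hsub, Finset.sum_pair (by simp [Prod.ext_iff, hpq])]
      rw [if_pos (Or.inl ⟨rfl, rfl⟩), if_pos (Or.inr ⟨rfl, rfl⟩)]
      have hzero2 : ∀ a b : Fin 2, a + b = 0 → b = a := by decide
      have hone2 : ∀ a b : Fin 2, a + b = 1 → b ≠ a := by decide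
      have hout : ∀ m, m ≠ p → m ≠ q → S' m = S m := by
        intro m hmp hmq
        have := hD m
        rw [eu_ne p m hmp, eu_ne q m hmq] at this
        exact hzero2 _ _ this.symm
      have hp : S' p ≠ S p := by
        have := hD p
        rw [eu_self, eu_ne q p hpq] at this
        exact hone2 _ _ (by rw [← this]; decide)
      have hq : S' q ≠ S q := by
        have := hD q
        rw [eu_self, eu_ne p q (Ne.symm hpq)] at this
        exact hone2 _ _ (by rw [← this]; decide)
      have hcan := sgn_cancel S S' p q hpq hout hp hq
      linear_combination (cW n * cW n) * hcan
    · apply Finset.sum_eq_zero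
      intro k _
      apply Finset.sum_eq_zero
      intro l _
      rw [if_neg]
      intro h
      have h' := (hcond k l).mp h
      by_cases hkl : k = l
      · subst hkl
        apply hS
        funext m
        have := h' m
        have haa : ∀ a : Fin 2, a + a = 0 := by decide
        rw [haa] at this
        exact ((by decide : ∀ a b : Fin 2, (0 : Fin 2) = a + b → a = b) _ _ this)
      · exact hw ⟨k, l, hkl, h'⟩

/-- For every `n ≥ 1`, the `n`-qubit `W` state admits a basis under local unitaries: there
are `2^n` strings of local `2×2` unitaries mapping `W_n` to an orthonormal basis. -/
theorem stmt17 (n : ℕ) (hn : 1 ≤ n) :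
    ∃ U : Fin (2 ^ n) → Fin n → Matrix (Fin 2) (Fin 2) ℂ,
      (∀ j k, U j k ∈ Matrix.unitaryGroup (Fin 2) ℂ) ∧
      IsONBasis (fun j => kronPow (U j) *ᵥ Wstate n) := by
  set E : Fin (2 ^ n) → (Fin n → Fin 2) :=
    fun j => (finFunctionFinEquiv : (Fin n → Fin 2) ≃ Fin (2 ^ n)).symm j with hE
  refine ⟨fun j => Ufam (E j), fun j k => Ufam_unitary _ k, ?_, ?_⟩
  · intro j j'
    show star (kronPow (Ufam (E j)) *ᵥ Wstate n) ⬝ᵥ (kronPow (Ufam (E j')) *ᵥ Wstate n) = _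
    rw [mulVec_eq, mulVec_eq, gram hn]
    exact if_congr (Equiv.apply_eq_iff_eq _) rfl rfl
  · set f : Fin (2 ^ n) → (Fin n → Fin 2) → ℂ :=
      fun j => kronPow (Ufam (E j)) *ᵥ Wstate n with hf
    have hgram : ∀ j j', star (f j) ⬝ᵥ f j' = if j = j' then 1 else 0 := by
      intro j j'
      rw [hf]
      show star (kronPow (Ufam (E j)) *ᵥ Wstate n) ⬝ᵥ (kronPow (Ufam (E j')) *ᵥ Wstate n) = _
      rw [mulVec_eq, mulVec_eq, gram hn]
      exact if_congr (Equiv.apply_eq_iff_eq _) rfl rfl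
    have hli : LinearIndependent ℂ f := by
      rw [Fintype.linearIndependent_iff]
      intro g hg i
      have h0 : star (f i) ⬝ᵥ (∑ j, g j • f j) = g i := by
        rw [dotProduct]
        have : ∀ x, star (f i) x * (∑ j, g j • f j) x
            = ∑ j, g j * (star (f i) x * f j x) := by
          intro x
          rw [Finset.sum_apply, Finset.mul_sum]
          apply Finset.sum_congr rfl
          intro j _
          rw [Pi.smul_apply, smul_eq_mul]
          ring
        rw [Finset.sum_congr rfl (fun x _ => this x), Finset.sum_comm]
        have : ∀ j, (∑ x, g j * (star (f i) x * f j x)) = g j * (star (f i) ⬝ᵥ f j) := by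
          intro j
          rw [dotProduct, Finset.mul_sum]
        rw [Finset.sum_congr rfl (fun j _ => this j)]
        simp [hgram]
      rw [hg, dotProduct_zero] at h0
      exact h0.symm
    exact hli.span_eq_top_of_card_eq_finrank
      (by rw [Fintype.card_fin, Module.finrank_pi, Fintype.card_fun]; simp)
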